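/- For positive integers k, m, define C_{k,m} = exp((1/4π) ∫_{-π}^{π} ln(1 - (cos kθ + cos mθ)/2) dθ). Then 0 < C_{k,m} < 1, i.e., the integral ∫_{-π}^{π} ln(1 - (cos kθ + cos mθ)/2) dθ is finite and negative. -/

import Mathlib

open Real MeasureTheory Set

lemma logInt01 : IntervalIntegrable Real.log volume 0 1 := by
  have h : IntervalIntegrable (fun x : ℝ => -Real.log x) volume 0 1 := by
    apply intervalIntegral.intervalIntegrable_deriv_of_nonneg
      (g := fun x : ℝ => x - x * Real.log x)
    · exact (continuous_id.sub Real.continuous_mul_log).continuousOn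
    · intro x hx
      norm_num [Set.mem_Ioo] at hx
      have h1 : HasDerivAt (fun x : ℝ => x - x * Real.log x) (1 - (Real.log x + 1)) x :=
        (hasDerivAt_id x).sub (Real.hasDerivAt_mul_log (ne_of_gt hx.1))
      have h2 : -Real.log x = 1 - (Real.log x + 1) := by ring
      rw [h2]; exact h1
    · intro x hx
      norm_num [Set.mem_Ioo] at hx
      simp only [neg_nonneg]
      exact Real.log_nonpos hx.1.le hx.2.le
  have h2 := h.neg
  rw [show (-fun x : ℝ => -Real.log x) = Real.log by funext x; simp] at h2
  exact h2

lemma logIntc {c : ℝ} (hc : 0 < c) : IntervalIntegrable Real.log volume 0 c := by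
  refine logInt01.trans (intervalIntegral.intervalIntegrable_log ?_)
  intro h
  rw [Set.mem_uIcc] at h
  rcases h with ⟨h1, _⟩ | ⟨h1, _⟩ <;> linarith

lemma logsin_half : IntervalIntegrable (fun x : ℝ => Real.log |Real.sin x|) volume 0 (π/2) := by
  have hg : IntervalIntegrable (fun x : ℝ => -Real.log x + Real.log (π/2)) volume 0 (π/2) :=
    ((logIntc (by positivity)).neg).add intervalIntegrable_const
  refine hg.mono_fun ?_ ?_
  · exact (Real.measurable_log.comp Real.continuous_sin.measurable.abs).aestronglyMeasurable
  · rw [Set.uIoc_of_le (by positivity)]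
    filter_upwards [ae_restrict_mem measurableSet_Ioc] with x hx
    have hx0 : (0:ℝ) < x := hx.1
    have hsin : 2/π * x ≤ Real.sin x := Real.mul_le_sin hx0.le hx.2
    have hs0 : 0 < Real.sin x := lt_of_lt_of_le (by positivity) hsin
    have hs1 : Real.sin x ≤ 1 := Real.sin_le_one x
    have hlog1 : Real.log (Real.sin x) ≤ 0 := Real.log_nonpos hs0.le hs1
    have hlog2 : Real.log (2/π * x) ≤ Real.log (Real.sin x) :=
      Real.log_le_log (by positivity) hsin
    have hsplit : Real.log (2/π * x) = Real.log x - Real.log (π/2) := by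
      rw [Real.log_mul (by positivity) (ne_of_gt hx0),
        show (2/π : ℝ) = (π/2)⁻¹ by field_simp, Real.log_inv]
      ring
    have hxle : Real.log x ≤ Real.log (π/2) := Real.log_le_log hx0 hx.2
    simp only [Real.norm_eq_abs, abs_of_pos hs0]
    rw [abs_of_nonpos hlog1, abs_of_nonneg (by linarith : (0:ℝ) ≤ -Real.log x + Real.log (π/2))]
    linarith

lemma logsin_pi : IntervalIntegrable (fun x : ℝ => Real.log |Real.sin x|) volume 0 π := by
  refine logsin_half.trans ?_
  have h := logsin_half.comp_sub_left π
  have he : (fun x : ℝ => Real.log |Real.sin (π - x)|) = fun x : ℝ => Real.log |Real.sin x| := by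
    funext x; rw [Real.sin_pi_sub]
  rw [he, sub_zero, show π - π/2 = π/2 by ring] at h
  exact h.symm

lemma logsin_shift (n : ℤ) :
    IntervalIntegrable (fun x : ℝ => Real.log |Real.sin x|) volume (n*π) (n*π + π) := by
  have h := logsin_pi.comp_add_right (-(n*π))
  have he : (fun x : ℝ => Real.log |Real.sin (x + -(n*π))|)
      = fun x : ℝ => Real.log |Real.sin x| := by
    funext x
    rw [show x + -((n:ℝ)*π) = x - n*π by ring, Real.sin_sub_int_mul_pi, abs_mul,
      show |((-1:ℝ))^n| = 1 from by
        rcases Int.even_or_odd n with h | h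
        · rw [h.neg_one_zpow, abs_one]
        · rw [Odd.neg_one_zpow h, abs_neg, abs_one],
      one_mul]
  rw [he] at h
  simp only [zero_sub, neg_neg, sub_neg_eq_add, zero_add] at h
  rwa [add_comm ((n:ℝ)*π) π]

lemma logsin_nat (n : ℕ) :
    IntervalIntegrable (fun x : ℝ => Real.log |Real.sin x|) volume 0 (n*π) := by
  induction n with
  | zero => simp
  | succ n ih =>
      have h := logsin_shift n
      push_cast at h
      push_cast
      rw [show ((n:ℝ)+1)*π = (n:ℝ)*π + π by ring]
      exact ih.trans h

lemma logsin_sym (n : ℕ) :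
    IntervalIntegrable (fun x : ℝ => Real.log |Real.sin x|) volume (-(n*π)) (n*π) := by
  have h := (IntervalIntegrable.iff_comp_neg).mp (logsin_nat n)
  have he : (fun x : ℝ => Real.log |Real.sin (-x)|) = fun x : ℝ => Real.log |Real.sin x| := by
    funext x; rw [Real.sin_neg, abs_neg]
  rw [he] at h
  simp only [neg_zero] at h
  exact h.symm.trans (logsin_nat n)

lemma key (k : ℕ) (hk : 0 < k) :
    IntervalIntegrable (fun θ : ℝ => Real.log (|Real.sin ((k:ℝ)*θ/2)|)) volume (-π) π := by
  have hkR : (0:ℝ) < k := by exact_mod_cast hk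
  have hk1 : (1:ℝ) ≤ k := by exact_mod_cast hk
  have base : IntervalIntegrable (fun x : ℝ => Real.log |Real.sin x|) volume
      ((k/2 : ℝ)*(-π)) ((k/2 : ℝ)*π) := by
    refine (logsin_sym k).mono_set ?_
    apply Set.uIcc_subset_uIcc <;> rw [Set.mem_uIcc]
    · left
      constructor <;> nlinarith [pi_pos]
    · left
      constructor <;> nlinarith [pi_pos]
  have h := base.comp_mul_left (c := (k/2 : ℝ)) enorm_ne_top enorm_ne_top
  have hne : (k/2 : ℝ) ≠ 0 := by positivity
  rw [mul_div_cancel_left₀ _ hne, mul_div_cancel_left₀ _ hne] at h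
  have he : (fun x : ℝ => Real.log |Real.sin ((k/2:ℝ) * x)|)
      = fun θ : ℝ => Real.log |Real.sin ((k:ℝ)*θ/2)| := by
    funext x; rw [show (k/2:ℝ)*x = (k:ℝ)*x/2 by ring]
  rwa [he] at h

theorem stmt_7 (k m : ℕ) (hk : 0 < k) (hm : 0 < m) :
    IntervalIntegrable
        (fun θ : ℝ => Real.log (1 - (Real.cos (k * θ) + Real.cos (m * θ)) / 2))
        volume (-π) π ∧
    (∫ θ in (-π)..π, Real.log (1 - (Real.cos (k * θ) + Real.cos (m * θ)) / 2)) < 0 ∧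
    0 < Real.exp ((1 / (4 * π)) *
        ∫ θ in (-π)..π, Real.log (1 - (Real.cos (k * θ) + Real.cos (m * θ)) / 2)) ∧
    Real.exp ((1 / (4 * π)) *
        ∫ θ in (-π)..π, Real.log (1 - (Real.cos (k * θ) + Real.cos (m * θ)) / 2)) < 1 := by
  have hkR : (0:ℝ) < k := by exact_mod_cast hk
  set F : ℝ → ℝ := fun θ => 1 - (Real.cos (k*θ) + Real.cos (m*θ))/2 with hFdef
  have hc : Continuous F := by fun_prop
  have hF2 : ∀ θ, F θ ≤ 2 := by
    intro θ
    have h1 := Real.neg_one_le_cos ((k:ℝ)*θ)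
    have h2 := Real.neg_one_le_cos ((m:ℝ)*θ)
    simp only [hFdef]; linarith
  have hFlb : ∀ θ, Real.sin ((k:ℝ)*θ/2)^2 ≤ F θ := by
    intro θ
    have h1 := Real.sin_sq_eq_half_sub ((k:ℝ)*θ/2)
    rw [show 2*((k:ℝ)*θ/2) = (k:ℝ)*θ by ring] at h1
    have h2 := Real.cos_le_one ((m:ℝ)*θ)
    simp only [hFdef]; linarith
  have haeF : ∀ᵐ θ : ℝ ∂volume, Real.sin ((k:ℝ)*θ/2) ≠ 0 := by
    rw [ae_iff]
    simp only [ne_eq, not_not]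
    have hsub : {θ : ℝ | Real.sin ((k:ℝ)*θ/2) = 0}
        ⊆ Set.range (fun n : ℤ => 2*(n:ℝ)*π/(k:ℝ)) := by
      intro θ hθ
      rw [Set.mem_setOf_eq, Real.sin_eq_zero_iff] at hθ
      obtain ⟨n, hn⟩ := hθ
      refine ⟨n, ?_⟩
      rw [div_eq_iff (ne_of_gt hkR)]
      linear_combination 2*hn
    exact ((Set.countable_range _).mono hsub).measure_zero volume
  have main : IntervalIntegrable (fun θ => Real.log (F θ)) volume (-π) π := by
    have gInt : IntervalIntegrable
        (fun θ : ℝ => Real.log 2 + 2*|Real.log (|Real.sin ((k:ℝ)*θ/2)|)|) volume (-π) π :=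
      intervalIntegrable_const.add (((key k hk).abs).const_mul 2)
    refine gInt.mono_fun ?_ ?_
    · exact (Real.measurable_log.comp hc.measurable).aestronglyMeasurable
    · apply ae_restrict_of_ae
      filter_upwards [haeF] with θ hs
      have hsq : 0 < Real.sin ((k:ℝ)*θ/2)^2 :=
        lt_of_le_of_ne (sq_nonneg _) (Ne.symm (pow_ne_zero 2 hs))
      have hFpos : 0 < F θ := lt_of_lt_of_le hsq (hFlb θ)
      have hup : Real.log (F θ) ≤ Real.log 2 := Real.log_le_log hFpos (hF2 θ)
      have hlo : 2 * Real.log (|Real.sin ((k:ℝ)*θ/2)|) ≤ Real.log (F θ) := by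
        have h3 := Real.log_le_log hsq (hFlb θ)
        rwa [show Real.sin ((k:ℝ)*θ/2)^2 = |Real.sin ((k:ℝ)*θ/2)|^2 by rw [sq_abs],
          Real.log_pow, Nat.cast_ofNat] at h3
      have hnn : 0 ≤ Real.log 2 + 2*|Real.log (|Real.sin ((k:ℝ)*θ/2)|)| := by positivity
      have hl2 : (0:ℝ) ≤ Real.log 2 := Real.log_nonneg one_le_two
      simp only [Real.norm_eq_abs]
      rw [abs_of_nonneg hnn, abs_le]
      constructor
      · have h4 := neg_abs_le (Real.log (|Real.sin ((k:ℝ)*θ/2)|))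
        linarith
      · have h5 := abs_nonneg (Real.log (|Real.sin ((k:ℝ)*θ/2)|))
        linarith
  have hcos : ∀ (j : ℕ), 0 < j → (∫ θ in (-π)..π, Real.cos ((j:ℝ)*θ)) = 0 := by
    intro j hj
    have hjR : ((j:ℝ)) ≠ 0 := (Nat.cast_pos.mpr hj).ne'
    rw [intervalIntegral.integral_comp_mul_left (fun x => Real.cos x) hjR]
    simp [integral_cos, mul_neg, Real.sin_neg, Real.sin_nat_mul_pi]
  have hFint : IntervalIntegrable (fun θ => F θ - 1) volume (-π) π :=
    (hc.sub continuous_const).intervalIntegrable _ _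
  have hzero : (∫ θ in (-π)..π, (F θ - 1)) = 0 := by
    have he : (fun θ : ℝ => F θ - 1)
        = fun θ => (-(1/2)) * Real.cos ((k:ℝ)*θ) + (-(1/2)) * Real.cos ((m:ℝ)*θ) := by
      funext θ; simp only [hFdef]; ring
    rw [he, intervalIntegral.integral_add
        ((by fun_prop : Continuous fun θ : ℝ => (-(1/2)) * Real.cos ((k:ℝ)*θ)).intervalIntegrable _ _)
        ((by fun_prop : Continuous fun θ : ℝ => (-(1/2)) * Real.cos ((m:ℝ)*θ)).intervalIntegrable _ _),
      intervalIntegral.integral_const_mul, intervalIntegral.integral_const_mul,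
      hcos k hk, hcos m hm]
    ring
  have hF0 : F 0 = 0 := by simp [hFdef]
  have hev : ∀ᶠ θ in nhds (0:ℝ), F θ < Real.exp (-2) := by
    have h := hc.continuousAt (x := 0)
    rw [ContinuousAt, hF0] at h
    exact h.eventually_lt_const (Real.exp_pos _)
  obtain ⟨δ, hδpos, hδ⟩ := Metric.eventually_nhds_iff.mp hev
  set b := min δ (π/(k:ℝ)) with hbdef
  have hbpos : 0 < b := lt_min hδpos (by positivity)
  have hbk : b ≤ π/(k:ℝ) := min_le_right _ _
  have hbπ : b ≤ π := hbk.trans (div_le_self pi_pos.le (by exact_mod_cast hk))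
  set G : ℝ → ℝ := fun θ => (F θ - 1) - Real.log (F θ) with hGdef
  have hpos : ∀ θ ∈ Set.Ioo (b/2) b, 0 < G θ := by
    intro θ hθ
    have hθ0 : 0 < θ := lt_trans (half_pos hbpos) hθ.1
    have hθδ : dist θ 0 < δ := by
      rw [Real.dist_eq, sub_zero, abs_of_pos hθ0]
      exact hθ.2.trans_le (min_le_left _ _)
    have hFlt : F θ < Real.exp (-2) := hδ hθδ
    have hsinpos : 0 < Real.sin ((k:ℝ)*θ/2) := by
      apply Real.sin_pos_of_pos_of_lt_pi
      · positivity
      · rw [mul_comm]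
        have h3 : θ*(k:ℝ) < π := (lt_div_iff₀ hkR).mp (hθ.2.trans_le hbk)
        linarith [pi_pos]
    have hFpos : 0 < F θ := lt_of_lt_of_le (pow_pos hsinpos 2) (hFlb θ)
    have hlog : Real.log (F θ) < -2 := by
      have h4 := Real.log_lt_log hFpos hFlt
      rwa [Real.log_exp] at h4
    simp only [hGdef]
    linarith
  have hGint : IntervalIntegrable G volume (-π) π := hFint.sub main
  have hGae : ∀ᵐ θ : ℝ ∂volume, 0 ≤ G θ := by
    filter_upwards [haeF] with θ hs
    have hsq : 0 < Real.sin ((k:ℝ)*θ/2)^2 :=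
      lt_of_le_of_ne (sq_nonneg _) (Ne.symm (pow_ne_zero 2 hs))
    have hFpos : 0 < F θ := lt_of_lt_of_le hsq (hFlb θ)
    have h5 := Real.log_le_sub_one_of_pos hFpos
    simp only [hGdef]
    linarith
  have hhalf : b/2 ≤ b := by linarith
  have hsub1 : Set.uIcc (b/2) b ⊆ Set.uIcc (-π) π := by
    rw [Set.uIcc_of_le hhalf, Set.uIcc_of_le (by linarith [pi_pos] : -π ≤ π)]
    exact Set.Icc_subset_Icc (by linarith [half_pos hbpos, pi_pos]) hbπ
  have hsubA : Set.uIcc (-π) (b/2) ⊆ Set.uIcc (-π) π := by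
    rw [Set.uIcc_of_le (by linarith [half_pos hbpos, pi_pos] : -π ≤ b/2),
      Set.uIcc_of_le (by linarith [pi_pos] : -π ≤ π)]
    exact Set.Icc_subset_Icc le_rfl (by linarith)
  have hsubB : Set.uIcc (-π) b ⊆ Set.uIcc (-π) π := by
    rw [Set.uIcc_of_le (by linarith [pi_pos] : -π ≤ b),
      Set.uIcc_of_le (by linarith [pi_pos] : -π ≤ π)]
    exact Set.Icc_subset_Icc le_rfl hbπ
  have hB : 0 < ∫ θ in (b/2)..b, G θ :=
    intervalIntegral.intervalIntegral_pos_of_pos_on (hGint.mono_set hsub1) hpos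
      (by linarith [hbpos])
  have hA : 0 ≤ ∫ θ in (-π)..(b/2), G θ :=
    intervalIntegral.integral_nonneg_of_ae (by linarith [half_pos hbpos, pi_pos]) hGae
  have hC : 0 ≤ ∫ θ in b..π, G θ :=
    intervalIntegral.integral_nonneg_of_ae hbπ hGae
  have hsubC : Set.uIcc b π ⊆ Set.uIcc (-π) π := by
    rw [Set.uIcc_of_le hbπ, Set.uIcc_of_le (by linarith [pi_pos] : -π ≤ π)]
    exact Set.Icc_subset_Icc (by linarith) le_rfl
  have hsplit2 : ((∫ θ in (-π)..(b/2), G θ) + (∫ θ in (b/2)..b, G θ)) + (∫ θ in b..π, G θ)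
      = ∫ θ in (-π)..π, G θ := by
    rw [intervalIntegral.integral_add_adjacent_intervals (hGint.mono_set hsubA)
        (hGint.mono_set hsub1),
      intervalIntegral.integral_add_adjacent_intervals (hGint.mono_set hsubB)
        (hGint.mono_set hsubC)]
  have hGpos : 0 < ∫ θ in (-π)..π, G θ := by rw [← hsplit2]; linarith
  have hJ : (∫ θ in (-π)..π, Real.log (F θ)) < 0 := by
    have hsubint : (∫ θ in (-π)..π, G θ)
        = (∫ θ in (-π)..π, (F θ - 1)) - ∫ θ in (-π)..π, Real.log (F θ) :=
      intervalIntegral.integral_sub hFint main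
    rw [hzero] at hsubint
    linarith
  refine ⟨main, hJ, Real.exp_pos _, ?_⟩
  rw [Real.exp_lt_one_iff]
  apply mul_neg_of_pos_of_neg
  · positivity
  · exact hJ
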